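/- Let ω : ℂ[w₀,…,w₉] → C be as follows: C is ℂ[x₀,x₁,x₂,y₃,y₄,y₅] modulo the ideal generated by x₀²−3x₁²+2x₂²+3y₃²−8y₄²+5y₅² and 3x₀²−8x₁²+5x₂²+y₃²−3y₄²+2y₅², and ω sends w₀ ↦ x₂², w₁ ↦ x₀x₁, w₂ ↦ x₀x₂, w₃ ↦ x₁x₂, w₄ ↦ y₃², w₅ ↦ y₄², w₆ ↦ y₅², w₇ ↦ y₃y₄, w₈ ↦ y₃y₅, w₉ ↦ y₄y₅. Consider the points of ℂ¹⁰: P₁=(1,1,1,1,0,0,0,0,0,0), P₂=(1,−1,−1,1,0,0,0,0,0,0), P₃=(1,−1,1,−1,0,0,0,0,0,0), P₄=(1,1,−1,−1,0,0,0,0,0,0), P₁′=(0,0,0,0,1,1,1,1,1,1), P₂′=(0,0,0,0,1,1,1,−1,−1,1), P₃′=(0,0,0,0,1,1,1,−1,1,−1), P₄′=(0,0,0,0,1,1,1,1,−1,−1). Then: (a) for all 1 ≤ i,j ≤ 4, every f ∈ ker ω and all s,t ∈ ℂ satisfy f(s·P_i + t·P_j′) = 0; (b) for every pair of distinct indices i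 ≠ j in {1,2,3,4} there exist f ∈ ker ω and s,t ∈ ℂ with f(s·P_i + t·P_j) ≠ 0, and likewise there exist g ∈ ker ω and s,t ∈ ℂ with g(s·P_i′ + t·P_j′) ≠ 0. -/
import Mathlib


set_option maxHeartbeats 1000000

open MvPolynomial

/-- The ideal of ℂ[x₀,x₁,x₂,y₃,y₄,y₅] (variables `X 0,X 1,X 2` = x₀,x₁,x₂ and
`X 3,X 4,X 5` = y₃,y₄,y₅) generated by the two quadrics
x₀²−3x₁²+2x₂²+3y₃²−8y₄²+5y₅² and 3x₀²−8x₁²+5x₂²+y₃²−3y₄²+2y₅². -/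
noncomputable def I9 : Ideal (MvPolynomial (Fin 6) ℂ) :=
  Ideal.span
    {X 0 ^ 2 - 3 * X 1 ^ 2 + 2 * X 2 ^ 2 + 3 * X 3 ^ 2 - 8 * X 4 ^ 2 + 5 * X 5 ^ 2,
     3 * X 0 ^ 2 - 8 * X 1 ^ 2 + 5 * X 2 ^ 2 + X 3 ^ 2 - 3 * X 4 ^ 2 + 2 * X 5 ^ 2}

/-- The ℂ-algebra homomorphism ω : ℂ[w₀,…,w₉] → C = ℂ[x,y]/I9 determined by
w₀ ↦ x₂², w₁ ↦ x₀x₁, w₂ ↦ x₀x₂, w₃ ↦ x₁x₂, w₄ ↦ y₃², w₅ ↦ y₄², w₆ ↦ y₅²,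
w₇ ↦ y₃y₄, w₈ ↦ y₃y₅, w₉ ↦ y₄y₅ (mod I9). -/
noncomputable def omega : MvPolynomial (Fin 10) ℂ →ₐ[ℂ] (MvPolynomial (Fin 6) ℂ ⧸ I9) :=
  aeval fun i => Ideal.Quotient.mk I9
    (![X 2 ^ 2, X 0 * X 1, X 0 * X 2, X 1 * X 2, X 3 ^ 2, X 4 ^ 2, X 5 ^ 2,
       X 3 * X 4, X 3 * X 5, X 4 * X 5] i)

/-- The singular points P₁,…,P₄ of W_{BS}⁹ (affine representatives in ℂ¹⁰),
indexed by `Fin 4` (so `P 0` is P₁, etc.). -/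
noncomputable def P : Fin 4 → Fin 10 → ℂ :=
  ![![1, 1, 1, 1, 0, 0, 0, 0, 0, 0], ![1, -1, -1, 1, 0, 0, 0, 0, 0, 0],
    ![1, -1, 1, -1, 0, 0, 0, 0, 0, 0], ![1, 1, -1, -1, 0, 0, 0, 0, 0, 0]]

/-- The singular points P₁′,…,P₄′ of W_{BS}⁹ (affine representatives in ℂ¹⁰),
indexed by `Fin 4` (so `P' 0` is P₁′, etc.). -/
noncomputable def P' : Fin 4 → Fin 10 → ℂ :=
  ![![0, 0, 0, 0, 1, 1, 1, 1, 1, 1], ![0, 0, 0, 0, 1, 1, 1, -1, -1, 1],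
    ![0, 0, 0, 0, 1, 1, 1, -1, 1, -1], ![0, 0, 0, 0, 1, 1, 1, 1, -1, -1]]

section VecLemmas
variable {α : Type*} (a0 a1 a2 a3 a4 a5 a6 a7 a8 a9 : α)

@[simp] lemma vec10_0 : ![a0,a1,a2,a3,a4,a5,a6,a7,a8,a9] 0 = a0 := rfl
@[simp] lemma vec10_1 : ![a0,a1,a2,a3,a4,a5,a6,a7,a8,a9] 1 = a1 := rfl
@[simp] lemma vec10_2 : ![a0,a1,a2,a3,a4,a5,a6,a7,a8,a9] 2 = a2 := rfl
@[simp] lemma vec10_3 : ![a0,a1,a2,a3,a4,a5,a6,a7,a8,a9] 3 = a3 := rfl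
@[simp] lemma vec10_4 : ![a0,a1,a2,a3,a4,a5,a6,a7,a8,a9] 4 = a4 := rfl
@[simp] lemma vec10_5 : ![a0,a1,a2,a3,a4,a5,a6,a7,a8,a9] 5 = a5 := rfl
@[simp] lemma vec10_6 : ![a0,a1,a2,a3,a4,a5,a6,a7,a8,a9] 6 = a6 := rfl
@[simp] lemma vec10_7 : ![a0,a1,a2,a3,a4,a5,a6,a7,a8,a9] 7 = a7 := rfl
@[simp] lemma vec10_8 : ![a0,a1,a2,a3,a4,a5,a6,a7,a8,a9] 8 = a8 := rfl
@[simp] lemma vec10_9 : ![a0,a1,a2,a3,a4,a5,a6,a7,a8,a9] 9 = a9 := rfl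
@[simp] lemma vec6_0 : ![a0,a1,a2,a3,a4,a5] 0 = a0 := rfl
@[simp] lemma vec6_1 : ![a0,a1,a2,a3,a4,a5] 1 = a1 := rfl
@[simp] lemma vec6_2 : ![a0,a1,a2,a3,a4,a5] 2 = a2 := rfl
@[simp] lemma vec6_3 : ![a0,a1,a2,a3,a4,a5] 3 = a3 := rfl
@[simp] lemma vec6_4 : ![a0,a1,a2,a3,a4,a5] 4 = a4 := rfl
@[simp] lemma vec6_5 : ![a0,a1,a2,a3,a4,a5] 5 = a5 := rfl
end VecLemmas

noncomputable def mvec : Fin 10 → MvPolynomial (Fin 6) ℂ :=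
  ![X 2 ^ 2, X 0 * X 1, X 0 * X 2, X 1 * X 2, X 3 ^ 2, X 4 ^ 2, X 5 ^ 2,
    X 3 * X 4, X 3 * X 5, X 4 * X 5]

lemma omega_apply (f : MvPolynomial (Fin 10) ℂ) :
    omega f = Ideal.Quotient.mk I9 (aeval mvec f) := by
  have h := MvPolynomial.comp_aeval (f := mvec) (φ := Ideal.Quotient.mkₐ ℂ I9)
  have := DFunLike.congr_fun h f
  simpa [omega, mvec] using this.symm

/-- key vanishing lemma -/
lemma vanish (f : MvPolynomial (Fin 10) ℂ) (hf : f ∈ RingHom.ker omega)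
    (a : Fin 6 → ℂ)
    (h1 : eval a (X 0 ^ 2 - 3 * X 1 ^ 2 + 2 * X 2 ^ 2 + 3 * X 3 ^ 2 - 8 * X 4 ^ 2
      + 5 * X 5 ^ 2 : MvPolynomial (Fin 6) ℂ) = 0)
    (h2 : eval a (3 * X 0 ^ 2 - 8 * X 1 ^ 2 + 5 * X 2 ^ 2 + X 3 ^ 2 - 3 * X 4 ^ 2
      + 2 * X 5 ^ 2 : MvPolynomial (Fin 6) ℂ) = 0) :
    eval (fun k => eval a (mvec k)) f = 0 := by
  have hmem : aeval mvec f ∈ I9 := by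
    have hker := hf
    rw [RingHom.mem_ker, omega_apply] at hker
    exact (Ideal.Quotient.eq_zero_iff_mem).1 hker
  have hle : I9 ≤ RingHom.ker (eval a : MvPolynomial (Fin 6) ℂ →+* ℂ) := by
    rw [I9, Ideal.span_le]
    rintro g (rfl | rfl)
    · exact h1
    · exact h2
  have h0 : eval a (aeval mvec f) = 0 := hle hmem
  have hc := DFunLike.congr_fun
    (MvPolynomial.comp_aeval (f := mvec) (φ := (aeval a : MvPolynomial (Fin 6) ℂ →ₐ[ℂ] ℂ))) f
  exact hc.symm.trans h0

/-- Configuration of the eight singular points of W_{BS}⁹: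
(a) every 'mixed' line PᵢPⱼ′ lies on W_{BS}⁹ (every f ∈ ker ω vanishes on it);
(b) for distinct i ≠ j neither the line PᵢPⱼ nor the line Pᵢ′Pⱼ′ lies on W_{BS}⁹. -/
theorem configuration_of_singular_points_of_WBS9 :
    (∀ i j : Fin 4, ∀ f ∈ RingHom.ker omega, ∀ s t : ℂ,
      eval (s • P i + t • P' j) f = 0) ∧
    (∀ i j : Fin 4, i ≠ j →
      (∃ f ∈ RingHom.ker omega, ∃ s t : ℂ, eval (s • P i + t • P j) f ≠ 0) ∧
      (∃ g ∈ RingHom.ker omega, ∃ s t : ℂ, eval (s • P' i + t • P' j) g ≠ 0)) := by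
  constructor
  · intro i j f hf s t
    obtain ⟨u, hu⟩ := IsAlgClosed.exists_pow_nat_eq (k := ℂ) s (n := 2) (by norm_num)
    obtain ⟨v, hv⟩ := IsAlgClosed.exists_pow_nat_eq (k := ℂ) t (n := 2) (by norm_num)
    subst hu; subst hv
    have key : ∀ e : Fin 6 → ℂ, (∀ k, e k ^ 2 = 1) →
        eval (fun k => eval (fun n => e n * ![u,u,u,v,v,v] n) (mvec k)) f = 0 := by
      intro e he
      apply vanish f hf
      · simp only [map_add, map_sub, map_mul, map_pow, eval_X, eval_ofNat, vec6_0, vec6_1,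
          vec6_2, vec6_3, vec6_4, vec6_5]
        linear_combination u ^ 2 * he 0 - 3 * u ^ 2 * he 1 + 2 * u ^ 2 * he 2
          + 3 * v ^ 2 * he 3 - 8 * v ^ 2 * he 4 + 5 * v ^ 2 * he 5
      · simp only [map_add, map_sub, map_mul, map_pow, eval_X, eval_ofNat, vec6_0, vec6_1,
          vec6_2, vec6_3, vec6_4, vec6_5]
        linear_combination 3 * u ^ 2 * he 0 - 8 * u ^ 2 * he 1 + 5 * u ^ 2 * he 2
          + v ^ 2 * he 3 - 3 * v ^ 2 * he 4 + 2 * v ^ 2 * he 5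
    fin_cases i <;> fin_cases j <;>
    [ (have h := key ![1,1,1,1,1,1] ?_);
      (have h := key ![1,1,1,-1,1,1] ?_);
      (have h := key ![1,1,1,1,-1,1] ?_);
      (have h := key ![1,1,1,1,1,-1] ?_);
      (have h := key ![-1,1,1,1,1,1] ?_);
      (have h := key ![-1,1,1,-1,1,1] ?_);
      (have h := key ![-1,1,1,1,-1,1] ?_);
      (have h := key ![-1,1,1,1,1,-1] ?_);
      (have h := key ![1,-1,1,1,1,1] ?_);
      (have h := key ![1,-1,1,-1,1,1] ?_);
      (have h := key ![1,-1,1,1,-1,1] ?_);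
      (have h := key ![1,-1,1,1,1,-1] ?_);
      (have h := key ![1,1,-1,1,1,1] ?_);
      (have h := key ![1,1,-1,-1,1,1] ?_);
      (have h := key ![1,1,-1,1,-1,1] ?_);
      (have h := key ![1,1,-1,1,1,-1] ?_) ] <;>
    first
      | (intro k; fin_cases k <;> norm_num)
      | (refine Eq.trans (congrArg (fun p => eval p f) ?_) h
         funext k
         fin_cases k <;>
           simp [P, P', mvec, Pi.add_apply, Pi.smul_apply, smul_eq_mul] <;> ring)
  · intro i j hij
    constructor
    · refine ⟨2 * X 0 ^ 2 + X 2 ^ 2 - 3 * X 3 ^ 2 + 3 * X 0 * X 4 - 8 * X 0 * X 5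
        + 5 * X 0 * X 6, ?_, 1, 1, ?_⟩
      · rw [RingHom.mem_ker, omega_apply, Ideal.Quotient.eq_zero_iff_mem]
        have heq : (aeval mvec) (2 * X 0 ^ 2 + X 2 ^ 2 - 3 * X 3 ^ 2 + 3 * X 0 * X 4
            - 8 * X 0 * X 5 + 5 * X 0 * X 6 : MvPolynomial (Fin 10) ℂ)
            = X 2 ^ 2 * (X 0 ^ 2 - 3 * X 1 ^ 2 + 2 * X 2 ^ 2 + 3 * X 3 ^ 2 - 8 * X 4 ^ 2
              + 5 * X 5 ^ 2) := by
          simp only [map_add, map_sub, map_mul, map_pow, aeval_X, map_ofNat, mvec,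
            vec10_0, vec10_1, vec10_2, vec10_3, vec10_4, vec10_5, vec10_6, vec10_7,
            vec10_8, vec10_9]
          ring
        rw [heq]
        exact Ideal.mul_mem_left _ _ (Ideal.subset_span (Set.mem_insert _ _))
      · fin_cases i <;> fin_cases j <;> simp_all [P] <;> norm_num
    · refine ⟨X 7 ^ 2 + X 8 ^ 2 - X 4 * X 5 - X 4 * X 6, ?_, 1, 1, ?_⟩
      · rw [RingHom.mem_ker, omega_apply]
        have heq : (aeval mvec) (X 7 ^ 2 + X 8 ^ 2 - X 4 * X 5 - X 4 * X 6 :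
            MvPolynomial (Fin 10) ℂ) = 0 := by
          simp only [map_add, map_sub, map_mul, map_pow, aeval_X, mvec,
            vec10_4, vec10_5, vec10_6, vec10_7, vec10_8]
          ring
        rw [heq, map_zero]
      · fin_cases i <;> fin_cases j <;> simp_all [P'] <;> norm_num
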